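/- For p_1,...,p_4 ∈ [0, 1/2), the Jacobian determinant of the map (p_1,p_2,p_3,p_4) ↦ (s_1,s_2,s_3,s_4), with s_i = p_i ∏_{j≠i}(1-p_j) + (1-p_i)∏_{j≠i} p_j, is strictly positive; hence the map is locally invertible at every point of [0,1/2)^4. -/

import Mathlib

/-- The tree split probabilities of the 4-leaf star tree, as a function of the edge
change probabilities: `s i p = p i ∏_{j≠i}(1-p j) + (1-p i) ∏_{j≠i} p j`. -/
def starSplit (i : Fin 4) (p : Fin 4 → ℝ) : ℝ :=
  p i * ∏ j ∈ Finset.univ.erase i, (1 - p j) +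
    (1 - p i) * ∏ j ∈ Finset.univ.erase i, p j

lemma starSplit0 (p : Fin 4 → ℝ) :
    starSplit 0 p = p 0 * ((1 - p 1) * ((1 - p 2) * (1 - p 3))) + (1 - p 0) * (p 1 * (p 2 * p 3)) := by
  simp [starSplit, show Finset.univ.erase (0:Fin 4) = {1,2,3} by decide, Finset.prod_insert]

lemma starSplit1 (p : Fin 4 → ℝ) :
    starSplit 1 p = p 1 * ((1 - p 0) * ((1 - p 2) * (1 - p 3))) + (1 - p 1) * (p 0 * (p 2 * p 3)) := by
  simp [starSplit, show Finset.univ.erase (1:Fin 4) = {0,2,3} by decide, Finset.prod_insert]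

lemma starSplit2 (p : Fin 4 → ℝ) :
    starSplit 2 p = p 2 * ((1 - p 0) * ((1 - p 1) * (1 - p 3))) + (1 - p 2) * (p 0 * (p 1 * p 3)) := by
  simp [starSplit, show Finset.univ.erase (2:Fin 4) = {0,1,3} by decide, Finset.prod_insert]

lemma starSplit3 (p : Fin 4 → ℝ) :
    starSplit 3 p = p 3 * ((1 - p 0) * ((1 - p 1) * (1 - p 2))) + (1 - p 3) * (p 0 * (p 1 * p 2)) := by
  simp [starSplit, show Finset.univ.erase (3:Fin 4) = {0,1,2} by decide, Finset.prod_insert]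

/-- `starSplit i` is affine in each coordinate. -/
lemma starSplit_update_affine (p : Fin 4 → ℝ) (i j : Fin 4) (t : ℝ) :
    starSplit i (Function.update p j t) =
      starSplit i (Function.update p j 0) +
        (starSplit i (Function.update p j 1) - starSplit i (Function.update p j 0)) * t := by
  fin_cases i <;> fin_cases j <;>
    simp only [show ((⟨0, by norm_num⟩ : Fin 4)) = 0 from rfl, show ((⟨1, by norm_num⟩ : Fin 4)) = 1 from rfl,
      show ((⟨2, by norm_num⟩ : Fin 4)) = 2 from rfl, show ((⟨3, by norm_num⟩ : Fin 4)) = 3 from rfl,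
      starSplit0, starSplit1, starSplit2, starSplit3, Function.update_apply,
      Fin.reduceEq, if_true, if_false, reduceIte] <;> ring

lemma affine_hasDerivAt (g : ℝ → ℝ) (h : ∀ t, g t = g 0 + (g 1 - g 0) * t) (x : ℝ) :
    HasDerivAt g (g 1 - g 0) x := by
  have base : HasDerivAt (fun t => g 0 + (g 1 - g 0) * t) (g 1 - g 0) x := by
    simpa using ((hasDerivAt_id x).const_mul (g 1 - g 0)).const_add (g 0)
  exact base.congr_of_eventuallyEq (Filter.Eventually.of_forall h)

/-- The explicit Jacobian matrix. -/
noncomputable def starJac (p : Fin 4 → ℝ) : Matrix (Fin 4) (Fin 4) ℝ :=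
  let a := p 0; let b := p 1; let c := p 2; let d := p 3
  !![1 - d - c + c*d - b + b*d + b*c - 2*b*c*d, c*d - a + a*d + a*c - 2*a*c*d,
       b*d - a + a*d + a*b - 2*a*b*d, b*c - a + a*c + a*b - 2*a*b*c;
     c*d - b + b*d + b*c - 2*b*c*d, 1 - d - c + c*d - a + a*d + a*c - 2*a*c*d,
       -b + b*d + a*d + a*b - 2*a*b*d, -b + b*c + a*c + a*b - 2*a*b*c;
     -c + c*d + b*d + b*c - 2*b*c*d, -c + c*d + a*d + a*c - 2*a*c*d,
       1 - d - b + b*d - a + a*d + a*b - 2*a*b*d, -c + b*c + a*c + a*b - 2*a*b*c;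
     -d + c*d + b*d + b*c - 2*b*c*d, -d + c*d + a*d + a*c - 2*a*c*d,
       -d + b*d + a*d + a*b - 2*a*b*d, 1 - c - b + b*c - a + a*c + a*b - 2*a*b*c]

lemma starJac_entry (p : Fin 4 → ℝ) (i j : Fin 4) :
    starSplit i (Function.update p j 1) - starSplit i (Function.update p j 0) = starJac p i j := by
  fin_cases i <;> fin_cases j <;>
    simp only [show ((⟨0, by norm_num⟩ : Fin 4)) = 0 from rfl, show ((⟨1, by norm_num⟩ : Fin 4)) = 1 from rfl,
      show ((⟨2, by norm_num⟩ : Fin 4)) = 2 from rfl, show ((⟨3, by norm_num⟩ : Fin 4)) = 3 from rfl,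
      starSplit0, starSplit1, starSplit2, starSplit3, Function.update_apply,
      Fin.reduceEq, if_true, if_false, reduceIte, starJac,
      Matrix.cons_val', Matrix.cons_val_zero, Matrix.cons_val_one, Matrix.head_cons,
      Matrix.head_fin_const, Matrix.cons_val_fin_one, Matrix.empty_val',
      Matrix.cons_val_two, Matrix.cons_val_three, Matrix.tail_cons, Matrix.of_apply] <;> ring

lemma starSplit_hasDerivAt (p : Fin 4 → ℝ) (i j : Fin 4) :
    HasDerivAt (fun t => starSplit i (Function.update p j t)) (starJac p i j) (p j) := by
  rw [← starJac_entry]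
  exact affine_hasDerivAt _ (fun t => starSplit_update_affine p i j t) _

lemma my_det_fin_four (M : Matrix (Fin 4) (Fin 4) ℝ) :
    M.det = M 0 0*M 1 1*M 2 2*M 3 3 - M 0 0*M 1 1*M 2 3*M 3 2 - M 0 0*M 1 2*M 2 1*M 3 3 + M 0 0*M 1 2*M 2 3*M 3 1 + M 0 0*M 1 3*M 2 1*M 3 2 - M 0 0*M 1 3*M 2 2*M 3 1 - M 0 1*M 1 0*M 2 2*M 3 3 + M 0 1*M 1 0*M 2 3*M 3 2 + M 0 1*M 1 2*M 2 0*M 3 3 - M 0 1*M 1 2*M 2 3*M 3 0 - M 0 1*M 1 3*M 2 0*M 3 2 + M 0 1*M 1 3*M 2 2*M 3 0 + M 0 2*M 1 0*M 2 1*M 3 3 - M 0 2*M 1 0*M 2 3*M 3 1 - M 0 2*M 1 1*M 2 0*M 3 3 + M 0 2*M 1 1*M 2 3*M 3 0 + M 0 2*M 1 3*M 2 0*M 3 1 - M 0 2*M 1 3*M 2 1*M 3 0 - M 0 3*M 1 0*M 2 1*M 3 2 + M 0 3*M 1 0*M 2 2*M 3 1 + M 0 3*M 1 1*M 2 0*M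 3 2 - M 0 3*M 1 1*M 2 2*M 3 0 - M 0 3*M 1 2*M 2 0*M 3 1 + M 0 3*M 1 2*M 2 1*M 3 0 := by
  simp [Matrix.det_succ_row_zero, Fin.sum_univ_succ, Fin.succAbove,
    show (Fin.succ 2 : Fin 4) = 3 from rfl, show (Fin.castSucc 2 : Fin 4) = 2 from rfl,
    show ((1 : Fin 4) < Fin.succ 2) = True by simp]
  ring

set_option maxHeartbeats 1000000 in
lemma starJac_det (p : Fin 4 → ℝ) :
    (starJac p).det = 1/8 * (((1-2*p 0)*(1-2*p 1)+(1-2*p 2)*(1-2*p 3)) *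
      (((1-2*p 0)*(1-2*p 2)+(1-2*p 1)*(1-2*p 3)) *
        ((1-2*p 0)*(1-2*p 3)+(1-2*p 1)*(1-2*p 2)))) := by
  rw [my_det_fin_four]
  simp only [starJac, Matrix.cons_val', Matrix.cons_val_zero, Matrix.cons_val_one,
    Matrix.head_cons, Matrix.empty_val', Matrix.cons_val_fin_one, Matrix.head_fin_const,
    Matrix.cons_val_two, Matrix.cons_val_three, Matrix.tail_cons, Matrix.of_apply]
  ring

/-- For `p ∈ [0,1/2)⁴`, the Jacobian determinant of `(p₁,…,p₄) ↦ (s₁,…,s₄)` is strictly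
positive; hence the map is locally invertible (injective on a neighborhood) at every
point of `[0,1/2)⁴`. -/
theorem star_jacobian_det_pos_and_locally_invertible (p : Fin 4 → ℝ)
    (hp : ∀ j, p j ∈ Set.Ico (0 : ℝ) (1 / 2)) :
    0 < (Matrix.of fun i j : Fin 4 =>
        deriv (fun t => starSplit i (Function.update p j t)) (p j)).det ∧
      ∃ U : Set (Fin 4 → ℝ), IsOpen U ∧ p ∈ U ∧
        Set.InjOn (fun q (i : Fin 4) => starSplit i q) U := by
  have hM : (Matrix.of fun i j : Fin 4 =>
      deriv (fun t => starSplit i (Function.update p j t)) (p j)) = starJac p := by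
    ext i j
    exact (starSplit_hasDerivAt p i j).deriv
  have hx : ∀ j, 0 < 1 - 2 * p j := fun j => by
    have := (hp j).2; linarith
  have hpos : 0 < (starJac p).det := by
    rw [starJac_det]
    have h1 := mul_pos (hx 0) (hx 1)
    have h2 := mul_pos (hx 2) (hx 3)
    have h3 := mul_pos (hx 0) (hx 2)
    have h4 := mul_pos (hx 1) (hx 3)
    have h5 := mul_pos (hx 0) (hx 3)
    have h6 := mul_pos (hx 1) (hx 2)
    positivity
  refine ⟨hM ▸ hpos, ?_⟩
  -- local invertibility
  set f : (Fin 4 → ℝ) → (Fin 4 → ℝ) := fun q (i : Fin 4) => starSplit i q with hf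
  have hcd : ContDiff ℝ 1 f := by
    apply contDiff_pi.mpr
    intro i
    fin_cases i <;>
      simp only [f, show ((⟨0, by norm_num⟩ : Fin 4)) = 0 from rfl,
        show ((⟨1, by norm_num⟩ : Fin 4)) = 1 from rfl,
        show ((⟨2, by norm_num⟩ : Fin 4)) = 2 from rfl,
        show ((⟨3, by norm_num⟩ : Fin 4)) = 3 from rfl,
        starSplit0, starSplit1, starSplit2, starSplit3] <;> fun_prop
  have hD := (hcd.contDiffAt (x := p)).hasStrictFDerivAt one_ne_zero
  set D := fderiv ℝ f p with hDdef
  -- the derivative along coordinate directions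
  have hpath : ∀ j : Fin 4, HasDerivAt (fun t => Function.update p j t) (Pi.single j 1) (p j) := by
    intro j
    rw [hasDerivAt_pi]
    intro i
    rcases eq_or_ne i j with rfl | hij
    · simpa [Function.update_self, Pi.single_eq_same] using hasDerivAt_id' (x := p i)
    · simpa [Function.update_of_ne hij, Pi.single_eq_of_ne hij] using
        hasDerivAt_const (p j) (p i)
  have hDj : ∀ j : Fin 4, D (Pi.single j 1) = fun i => starJac p i j := by
    intro j
    have h1 : HasDerivAt (fun t => f (Function.update p j t)) (D (Pi.single j 1)) (p j) :=
      ((show HasFDerivAt f D (Function.update p j (p j)) by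
        rw [Function.update_eq_self]
        exact (hcd.differentiable one_ne_zero p).hasFDerivAt)).comp_hasDerivAt _ (hpath j)
    have h2 : HasDerivAt (fun t => f (Function.update p j t)) (fun i => starJac p i j) (p j) :=
      hasDerivAt_pi.mpr fun i => starSplit_hasDerivAt p i j
    exact h1.unique h2
  have hdetne : (starJac p).det ≠ 0 := ne_of_gt hpos
  have hinv : Invertible (starJac p) :=
    (starJac p).invertibleOfIsUnitDet (isUnit_iff_ne_zero.mpr hdetne)
  let e₀ : (Fin 4 → ℝ) ≃ₗ[ℝ] (Fin 4 → ℝ) := (starJac p).toLinearEquiv' hinv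
  let e : (Fin 4 → ℝ) ≃L[ℝ] (Fin 4 → ℝ) := e₀.toContinuousLinearEquiv
  have hDe : (e : (Fin 4 → ℝ) →L[ℝ] (Fin 4 → ℝ)) = D := by
    apply ContinuousLinearMap.coe_injective
    apply Module.Basis.ext (Pi.basisFun ℝ (Fin 4))
    intro j
    simp only [Pi.basisFun_apply, ContinuousLinearMap.coe_coe]
    rw [hDj j]
    show e₀ (Pi.single j 1) = _
    have : e₀ (Pi.single j 1) = Matrix.toLin' (starJac p) (Pi.single j 1) := rfl
    rw [this, Matrix.toLin'_apply]
    funext i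
    simp [Matrix.mulVec_single]
  have hstrict : HasStrictFDerivAt f (e : (Fin 4 → ℝ) →L[ℝ] (Fin 4 → ℝ)) p := by
    rw [hDe]; exact hD
  refine ⟨(hstrict.toOpenPartialHomeomorph f).source,
    (hstrict.toOpenPartialHomeomorph f).open_source,
    hstrict.mem_toOpenPartialHomeomorph_source, ?_⟩
  have := (hstrict.toOpenPartialHomeomorph f).injOn
  rwa [hstrict.toOpenPartialHomeomorph_coe] at this
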